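/- Assume moreover that C_n ∈ ℛ for every n ≥ 1. Then for every measurable set A ∈ 𝒜 with μ(A) = ∞ there exists a sequence (E_n)_{n≥1} of sets in ℛ such that (E_n) →_μ A and, for all n < m: μ(E_n \ E_m) ≤ 2^{-n}, μ((E_m ∩ C_n) \ E_n) ≤ 2^{-n}, and μ(E_n) ≥ 2^n. (Every measurable set of infinite measure admits a δ_μ-expansion.) -/

import Mathlib

open MeasureTheory Filter Set
open scoped ENNReal

/-- The limit relation `→_μ`: `(A n) →_μ L` iff `μ (A n \ L) → 0` and, for every
measurable `B` of finite measure, `μ ((L ∩ B) \ A n) → 0`. -/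
def ConvMu {Ω : Type*} [MeasurableSpace Ω] (μ : Measure Ω)
    (A : ℕ → Set Ω) (L : Set Ω) : Prop :=
  Tendsto (fun n => μ (A n \ L)) atTop (nhds 0) ∧
    ∀ B : Set Ω, MeasurableSet B → μ B < ⊤ →
      Tendsto (fun n => μ ((L ∩ B) \ A n)) atTop (nhds 0)

/-- Finite unions of members of a ring of sets belong to the ring. -/
lemma aux_biUnion_mem {Ω : Type*} {R : Set (Set Ω)} (hRempty : ∅ ∈ R)
    (hRunion : ∀ E ∈ R, ∀ F ∈ R, E ∪ F ∈ R) (s : Finset ℕ) (f : ℕ → Set Ω)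
    (hf : ∀ i ∈ s, f i ∈ R) : (⋃ i ∈ s, f i) ∈ R := by
  classical
  induction s using Finset.induction_on with
  | empty => simpa using hRempty
  | insert _ _ h ih =>
    rw [Finset.set_biUnion_insert]
    exact hRunion _ (hf _ (Finset.mem_insert_self _ _)) _
      (ih fun i hi => hf _ (Finset.mem_insert_of_mem hi))

/-- geometric tail sum bound -/
lemma aux_geom_sum (N : ℕ) : ∑ i ∈ Finset.range N, (2 : ℝ≥0∞)⁻¹ ^ (i + 1) ≤ 1 := by
  have h : ∑' i : ℕ, (2 : ℝ≥0∞)⁻¹ ^ (i + 1) = 1 := by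
    simp_rw [pow_succ']
    rw [ENNReal.tsum_mul_left, ENNReal.tsum_geometric, ENNReal.one_sub_inv_two, inv_inv]
    exact ENNReal.inv_mul_cancel two_ne_zero ENNReal.ofNat_ne_top
  calc ∑ i ∈ Finset.range N, (2 : ℝ≥0∞)⁻¹ ^ (i + 1)
      ≤ ∑' i : ℕ, (2 : ℝ≥0∞)⁻¹ ^ (i + 1) := ENNReal.sum_le_tsum _
    _ = 1 := h

/-- Approximation lemma: every measurable set can be approximated, within each `C k`,
by elements of the generating ring `R`. -/
lemma aux_approx {Ω : Type*} [m : MeasurableSpace Ω] (μ : Measure Ω)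
    (R : Set (Set Ω))
    (hRmeas : ∀ E ∈ R, MeasurableSet E)
    (hRunion : ∀ E ∈ R, ∀ F ∈ R, E ∪ F ∈ R)
    (hRdiff : ∀ E ∈ R, ∀ F ∈ R, E \ F ∈ R)
    (hRempty : ∅ ∈ R)
    (hRgen : MeasurableSpace.generateFrom R = m)
    (C : ℕ → Set Ω) (hCfin : ∀ n, μ (C n) < ⊤)
    (hCR : ∀ n, 1 ≤ n → C n ∈ R) :
    ∀ A : Set Ω, MeasurableSet A → ∀ k, 1 ≤ k → ∀ ε : ℝ≥0∞, ε ≠ 0 →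
      ∃ E ∈ R, E ⊆ C k ∧ μ (E \ A) ≤ ε ∧ μ ((A ∩ C k) \ E) ≤ ε := by
  intro A hA
  have hA' : MeasurableSet[MeasurableSpace.generateFrom R] A := by rw [hRgen]; exact hA
  refine MeasurableSpace.generateFrom_induction R
    (fun s _ => ∀ k, 1 ≤ k → ∀ ε : ℝ≥0∞, ε ≠ 0 →
      ∃ E ∈ R, E ⊆ C k ∧ μ (E \ s) ≤ ε ∧ μ ((s ∩ C k) \ E) ≤ ε) ?_ ?_ ?_ ?_ A hA'
  · -- basic
    intro t ht _ k hk ε hε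
    have hmem : t \ (t \ C k) ∈ R := hRdiff t ht _ (hRdiff t ht _ (hCR k hk))
    have heq : t \ (t \ C k) = t ∩ C k := Set.diff_diff_right_self t (C k)
    rw [heq] at hmem
    refine ⟨t ∩ C k, hmem, inter_subset_right, ?_, ?_⟩
    · rw [Set.diff_eq_empty.mpr inter_subset_left, measure_empty]; exact zero_le
    · rw [Set.diff_self, measure_empty]; exact zero_le
  · -- empty
    intro k hk ε hε
    exact ⟨∅, hRempty, empty_subset _, by simp, by simp⟩
  · -- compl
    intro t ht ih k hk ε hε
    obtain ⟨E, hER, hEsub, h1, h2⟩ := ih k hk ε hε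
    refine ⟨C k \ E, hRdiff _ (hCR k hk) _ hER, diff_subset, ?_, ?_⟩
    · refine le_trans (measure_mono ?_) h2
      intro x hx
      simp only [mem_diff, mem_compl_iff, not_not, mem_inter_iff] at *
      tauto
    · refine le_trans (measure_mono ?_) h1
      intro x hx
      simp only [mem_diff, mem_compl_iff, not_not, mem_inter_iff, not_and] at *
      tauto
  · -- iUnion
    intro s hs ih k hk ε hε
    have hsm : ∀ n, MeasurableSet (s n) := fun n => hRgen ▸ hs n
    have hCk : MeasurableSet (C k) := hRmeas _ (hCR k hk)
    set U : ℕ → Set Ω := fun N => ((⋃ i, s i) ∩ C k) \ ⋃ i ∈ Finset.range N, s i with hU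
    have hUanti : Antitone U := by
      intro a b hab
      refine diff_subset_diff_right (biUnion_subset_biUnion_left ?_)
      exact fun i hi => Finset.mem_range.mpr (lt_of_lt_of_le (Finset.mem_range.mp hi) hab)
    have hUmeas : ∀ N, NullMeasurableSet (U N) μ := by
      intro N
      exact (((MeasurableSet.iUnion hsm).inter hCk).diff
        (MeasurableSet.biUnion (Finset.range N).countable_toSet fun i _ => hsm i)).nullMeasurableSet
    have hUfin : ∃ N, μ (U N) ≠ ∞ :=
      ⟨0, (lt_of_le_of_lt (measure_mono (diff_subset.trans inter_subset_right)) (hCfin k)).ne⟩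
    have hUempty : ⋂ N, U N = ∅ := by
      ext x
      simp only [mem_iInter, mem_empty_iff_false, iff_false]
      intro h
      obtain ⟨⟨hxs, -⟩, -⟩ := h 0
      obtain ⟨i, hxi⟩ := mem_iUnion.mp hxs
      exact (h (i + 1)).2 (mem_biUnion (Finset.self_mem_range_succ i) hxi)
    have hUtend : Tendsto (fun N => μ (U N)) atTop (nhds 0) := by
      have := tendsto_measure_iInter_atTop hUmeas hUanti hUfin
      rwa [hUempty, measure_empty] at this
    have hhalf : (0 : ℝ≥0∞) < ε / 2 := ENNReal.half_pos hε
    obtain ⟨N, hN⟩ := (ENNReal.tendsto_nhds_zero.mp hUtend (ε / 2) hhalf).exists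
    set δ : ℕ → ℝ≥0∞ := fun i => ε / 2 * (2 : ℝ≥0∞)⁻¹ ^ (i + 1) with hδ
    have hδne : ∀ i, δ i ≠ 0 := by
      intro i
      exact mul_ne_zero hhalf.ne' (pow_ne_zero _ (ENNReal.inv_ne_zero.mpr ENNReal.ofNat_ne_top))
    choose E hER hEsub h1 h2 using fun i => ih i k hk (δ i) (hδne i)
    have hδsum : ∑ i ∈ Finset.range N, δ i ≤ ε / 2 := by
      rw [hδ, ← Finset.mul_sum]
      calc ε / 2 * ∑ i ∈ Finset.range N, (2 : ℝ≥0∞)⁻¹ ^ (i + 1)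
          ≤ ε / 2 * 1 := mul_le_mul_right (aux_geom_sum N) _
        _ = ε / 2 := mul_one _
    refine ⟨⋃ i ∈ Finset.range N, E i,
      aux_biUnion_mem hRempty hRunion _ _ (fun i _ => hER i), iUnion₂_subset fun i _ => hEsub i,
      ?_, ?_⟩
    · -- μ (⋃ E i \ ⋃ s j) ≤ ε
      have hsub : (⋃ i ∈ Finset.range N, E i) \ (⋃ j, s j) ⊆
          ⋃ i ∈ Finset.range N, (E i \ s i) := by
        intro x hx
        simp only [mem_diff, mem_iUnion, exists_prop] at hx ⊢
        obtain ⟨⟨i, hi, hxi⟩, hout⟩ := hx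
        exact ⟨i, hi, hxi, fun hxs => hout ⟨i, hxs⟩⟩
      calc μ ((⋃ i ∈ Finset.range N, E i) \ ⋃ j, s j)
          ≤ μ (⋃ i ∈ Finset.range N, (E i \ s i)) := measure_mono hsub
        _ ≤ ∑ i ∈ Finset.range N, μ (E i \ s i) := measure_biUnion_finset_le _ _
        _ ≤ ∑ i ∈ Finset.range N, δ i := Finset.sum_le_sum fun i _ => h1 i
        _ ≤ ε / 2 := hδsum
        _ ≤ ε := ENNReal.half_le_self
    · -- μ ((⋃ s i ∩ C k) \ ⋃ E i) ≤ ε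
      have hsub : ((⋃ i, s i) ∩ C k) \ (⋃ i ∈ Finset.range N, E i) ⊆
          U N ∪ ⋃ i ∈ Finset.range N, ((s i ∩ C k) \ E i) := by
        intro x hx
        obtain ⟨⟨hxs, hxC⟩, hout⟩ := hx
        by_cases hin : x ∈ ⋃ i ∈ Finset.range N, s i
        · right
          simp only [mem_iUnion, exists_prop] at hin ⊢
          obtain ⟨i, hi, hxi⟩ := hin
          exact ⟨i, hi, ⟨hxi, hxC⟩, fun hxE => hout (mem_biUnion hi hxE)⟩
        · exact Or.inl ⟨⟨hxs, hxC⟩, hin⟩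
      calc μ (((⋃ i, s i) ∩ C k) \ ⋃ i ∈ Finset.range N, E i)
          ≤ μ (U N ∪ ⋃ i ∈ Finset.range N, ((s i ∩ C k) \ E i)) := measure_mono hsub
        _ ≤ μ (U N) + μ (⋃ i ∈ Finset.range N, ((s i ∩ C k) \ E i)) := measure_union_le _ _
        _ ≤ ε / 2 + ∑ i ∈ Finset.range N, μ ((s i ∩ C k) \ E i) :=
            add_le_add hN (measure_biUnion_finset_le _ _)
        _ ≤ ε / 2 + ∑ i ∈ Finset.range N, δ i :=
            add_le_add le_rfl (Finset.sum_le_sum fun i _ => h2 i)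
        _ ≤ ε / 2 + ε / 2 := add_le_add le_rfl hδsum
        _ = ε := ENNReal.add_halves ε

theorem statement18 {Ω : Type*} [m : MeasurableSpace Ω] (μ : Measure Ω)
    (R : Set (Set Ω)) (hRcount : R.Countable)
    (hRmeas : ∀ E ∈ R, MeasurableSet E)
    (hRunion : ∀ E ∈ R, ∀ F ∈ R, E ∪ F ∈ R)
    (hRdiff : ∀ E ∈ R, ∀ F ∈ R, E \ F ∈ R)
    (hRempty : ∅ ∈ R)
    (hRfin : ∀ E ∈ R, μ E < ⊤)
    (hRcover : ⋃₀ R = Set.univ)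
    (hRgen : MeasurableSpace.generateFrom R = m)
    (C : ℕ → Set Ω) (hCmeas : ∀ n, MeasurableSet (C n)) (hCmono : Monotone C)
    (hC0 : C 0 = ∅) (hCfin : ∀ n, μ (C n) < ⊤)
    (hCgrow : ∀ n, (2 : ℝ≥0∞) ^ (n + 1) ≤ μ (C (n + 1) \ C n))
    (hCunion : (⋃ n, C n) = Set.univ)
    (hCR : ∀ n, 1 ≤ n → C n ∈ R) :
    ∀ A : Set Ω, MeasurableSet A → μ A = ⊤ →
      ∃ E : ℕ → Set Ω, (∀ n, E n ∈ R) ∧ ConvMu μ E A ∧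
        (∀ n k, 1 ≤ n → n < k → μ (E n \ E k) ≤ (2 : ℝ≥0∞)⁻¹ ^ n) ∧
        (∀ n k, 1 ≤ n → n < k → μ ((E k ∩ C n) \ E n) ≤ (2 : ℝ≥0∞)⁻¹ ^ n) ∧
        (∀ n, 1 ≤ n → (2 : ℝ≥0∞) ^ n ≤ μ (E n)) := by
  intro A hA hAtop
  -- the measures μ (A ∩ C j) tend to ⊤
  have hACtop : Tendsto (fun j => μ (A ∩ C j)) atTop (nhds ⊤) := by
    have hmono : Monotone fun j => A ∩ C j :=
      fun i j h => inter_subset_inter_right _ (hCmono h)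
    have := tendsto_measure_iUnion_atTop (μ := μ) hmono
    have hUn : ⋃ j, A ∩ C j = A := by rw [← inter_iUnion, hCunion, inter_univ]
    rw [hUn, hAtop] at this
    exact this
  have hg : ∀ n : ℕ, ∃ j, (2 : ℝ≥0∞) ^ n + 1 ≤ μ (A ∩ C j) := by
    intro n
    have hlt : (2 : ℝ≥0∞) ^ n + 1 < ⊤ :=
      lt_top_iff_ne_top.mpr (ENNReal.add_ne_top.mpr
        ⟨ENNReal.pow_ne_top ENNReal.ofNat_ne_top, ENNReal.one_ne_top⟩)
    exact (hACtop.eventually_const_le hlt).exists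
  choose g hgspec using hg
  -- the index function
  set M : ℕ → ℕ := fun n => (n ⊔ 1) ⊔ (Finset.range (n + 1)).sup g with hM
  have hMmono : Monotone M := by
    intro a b hab
    exact sup_le_sup (sup_le_sup hab le_rfl)
      (Finset.sup_mono (Finset.range_subset_range.mpr (by omega)))
  have hMge : ∀ n, n ≤ M n := fun n => le_trans le_sup_left le_sup_left
  have hM1 : ∀ n, 1 ≤ M n := fun n => le_trans le_sup_right le_sup_left
  have hMg : ∀ n, g n ≤ M n := fun n =>
    le_trans (Finset.le_sup (Finset.self_mem_range_succ n)) le_sup_right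
  have hμM : ∀ n, (2 : ℝ≥0∞) ^ n + 1 ≤ μ (A ∩ C (M n)) := fun n =>
    le_trans (hgspec n) (measure_mono (inter_subset_inter_right _ (hCmono (hMg n))))
  -- the tolerances
  set ε : ℕ → ℝ≥0∞ := fun n => (2 : ℝ≥0∞)⁻¹ ^ (n + 1) with hε
  have hεne : ∀ n, ε n ≠ 0 := fun n =>
    pow_ne_zero _ (ENNReal.inv_ne_zero.mpr ENNReal.ofNat_ne_top)
  have hεle : ∀ {n k : ℕ}, n ≤ k → ε k ≤ ε n := by
    intro n k h
    exact pow_le_pow_right_of_le_one' (ENNReal.inv_le_one.mpr (by norm_num)) (by omega)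
  have hεadd : ∀ {n k : ℕ}, n ≤ k → ε n + ε k ≤ (2 : ℝ≥0∞)⁻¹ ^ n := by
    intro n k h
    have heq : ε n + ε n = (2 : ℝ≥0∞)⁻¹ ^ n := by
      show (2 : ℝ≥0∞)⁻¹ ^ (n + 1) + (2 : ℝ≥0∞)⁻¹ ^ (n + 1) = (2 : ℝ≥0∞)⁻¹ ^ n
      rw [pow_succ, ← mul_add, ENNReal.inv_two_add_inv_two, mul_one]
    calc ε n + ε k ≤ ε n + ε n := add_le_add le_rfl (hεle h)
      _ = (2 : ℝ≥0∞)⁻¹ ^ n := heq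
  have hεone : ∀ n, ε n ≤ 1 := by
    intro n
    have := pow_le_pow_right_of_le_one' (a := (2 : ℝ≥0∞)⁻¹)
      (ENNReal.inv_le_one.mpr (by norm_num)) (Nat.zero_le (n + 1))
    simpa using this
  have hε0 : Tendsto ε atTop (nhds 0) :=
    (ENNReal.tendsto_pow_atTop_nhds_zero_of_lt_one
      (ENNReal.inv_lt_one.mpr ENNReal.one_lt_two)).comp (tendsto_add_atTop_nat 1)
  -- choose the approximating sets
  choose E hER hEsub h1 h2 using fun n =>
    aux_approx μ R hRmeas hRunion hRdiff hRempty hRgen C hCfin hCR A hA (M n) (hM1 n)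
      (ε n) (hεne n)
  refine ⟨E, hER, ⟨?_, ?_⟩, ?_, ?_, ?_⟩
  · -- μ (E n \ A) → 0
    exact tendsto_of_tendsto_of_tendsto_of_le_of_le tendsto_const_nhds hε0
      (fun n => zero_le) (fun n => h1 n)
  · -- second convergence condition
    intro B hB hBfin
    have hBC : Tendsto (fun n => μ (B \ C n)) atTop (nhds 0) := by
      have hanti : Antitone fun n => B \ C n :=
        fun i j h => diff_subset_diff_right (hCmono h)
      have hmeas : ∀ n, NullMeasurableSet (B \ C n) μ :=
        fun n => (hB.diff (hCmeas n)).nullMeasurableSet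
      have hfin : ∃ n, μ (B \ C n) ≠ ∞ :=
        ⟨0, (lt_of_le_of_lt (measure_mono diff_subset) hBfin).ne⟩
      have := tendsto_measure_iInter_atTop hmeas hanti hfin
      have hempty : ⋂ n, B \ C n = ∅ := by
        rw [← diff_iUnion, hCunion, diff_univ]
      rwa [hempty, measure_empty] at this
    have hbound : ∀ n, μ ((A ∩ B) \ E n) ≤ μ (B \ C n) + ε n := by
      intro n
      have hsub : (A ∩ B) \ E n ⊆ (B \ C n) ∪ ((A ∩ C (M n)) \ E n) := by
        intro x ⟨⟨hxA, hxB⟩, hxE⟩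
        by_cases hxC : x ∈ C n
        · exact Or.inr ⟨⟨hxA, hCmono (hMge n) hxC⟩, hxE⟩
        · exact Or.inl ⟨hxB, hxC⟩
      calc μ ((A ∩ B) \ E n) ≤ μ ((B \ C n) ∪ ((A ∩ C (M n)) \ E n)) := measure_mono hsub
        _ ≤ μ (B \ C n) + μ ((A ∩ C (M n)) \ E n) := measure_union_le _ _
        _ ≤ μ (B \ C n) + ε n := add_le_add le_rfl (h2 n)
    have hlim : Tendsto (fun n => μ (B \ C n) + ε n) atTop (nhds 0) := by
      have := hBC.add hε0
      simpa using this
    exact tendsto_of_tendsto_of_tendsto_of_le_of_le tendsto_const_nhds hlim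
      (fun n => zero_le) hbound
  · -- μ (E n \ E k) ≤ 2⁻¹ ^ n
    intro n k hn hnk
    have hsub : E n \ E k ⊆ (E n \ A) ∪ ((A ∩ C (M k)) \ E k) := by
      intro x ⟨hxE, hxEk⟩
      by_cases hxA : x ∈ A
      · exact Or.inr ⟨⟨hxA, hCmono (hMmono hnk.le) (hEsub n hxE)⟩, hxEk⟩
      · exact Or.inl ⟨hxE, hxA⟩
    calc μ (E n \ E k) ≤ μ ((E n \ A) ∪ ((A ∩ C (M k)) \ E k)) := measure_mono hsub
      _ ≤ μ (E n \ A) + μ ((A ∩ C (M k)) \ E k) := measure_union_le _ _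
      _ ≤ ε n + ε k := add_le_add (h1 n) (h2 k)
      _ ≤ (2 : ℝ≥0∞)⁻¹ ^ n := hεadd hnk.le
  · -- μ ((E k ∩ C n) \ E n) ≤ 2⁻¹ ^ n
    intro n k hn hnk
    have hsub : (E k ∩ C n) \ E n ⊆ (E k \ A) ∪ ((A ∩ C (M n)) \ E n) := by
      intro x ⟨⟨hxE, hxC⟩, hxEn⟩
      by_cases hxA : x ∈ A
      · exact Or.inr ⟨⟨hxA, hCmono (hMge n) hxC⟩, hxEn⟩
      · exact Or.inl ⟨hxE, hxA⟩
    calc μ ((E k ∩ C n) \ E n) ≤ μ ((E k \ A) ∪ ((A ∩ C (M n)) \ E n)) := measure_mono hsub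
      _ ≤ μ (E k \ A) + μ ((A ∩ C (M n)) \ E n) := measure_union_le _ _
      _ ≤ ε k + ε n := add_le_add (h1 k) (h2 n)
      _ ≤ (2 : ℝ≥0∞)⁻¹ ^ n := by rw [add_comm]; exact hεadd hnk.le
  · -- μ (E n) ≥ 2 ^ n
    intro n hn
    have hkey : (2 : ℝ≥0∞) ^ n + 1 ≤ μ (E n) + 1 := by
      calc (2 : ℝ≥0∞) ^ n + 1 ≤ μ (A ∩ C (M n)) := hμM n
        _ ≤ μ (((A ∩ C (M n)) \ E n) ∪ E n) := measure_mono (by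
            intro x hx
            by_cases hxE : x ∈ E n
            · exact Or.inr hxE
            · exact Or.inl ⟨hx, hxE⟩)
        _ ≤ μ ((A ∩ C (M n)) \ E n) + μ (E n) := measure_union_le _ _
        _ ≤ ε n + μ (E n) := add_le_add (h2 n) le_rfl
        _ ≤ 1 + μ (E n) := add_le_add (hεone n) le_rfl
        _ = μ (E n) + 1 := add_comm _ _
    exact (ENNReal.add_le_add_iff_right ENNReal.one_ne_top).mp hkey
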